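/- With the setup of the cones $P$ and $C$ above (finite index set $\mathcal{A}$, vectors $g_i$, convex functions $\zeta_i$, closed convex $X$, point $\bar{x} \in X$), suppose additionally there exists $\bar{d} \in \mathcal{T}_X(\bar{x})$ such that $g_i^T \bar{d} + \zeta_i'(\bar{x}; \bar{d}) < 0$ for all $i \in \mathcal{A}$ (a pointwise Slater condition). Then the cone $P = \{ \sum_{i \in \mathcal{A}} \lambda_i (g_i + v_i) + w : \lambda_i \ge 0, \ v_i \in \partial \zeta_i(\bar{x}), \ w \in \mathcal{N}_X(\bar{x}) \}$ is closed, and consequently $P = C^{\circ}$ where $C = \{ d \in \mathcal{T}_X(\bar{x}) : g_i^T d + \zeta_i'(\bar{x}; d) \le 0, \ \forall i \in \mathcal{A} \}$. -/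

import Mathlib

open Set

variable {n : ℕ}

/-- Convex subdifferential of a finite convex function. -/
def subdiff (ζ : EuclideanSpace ℝ (Fin n) → ℝ) (x : EuclideanSpace ℝ (Fin n)) :
    Set (EuclideanSpace ℝ (Fin n)) :=
  {v | ∀ y, ζ x + (inner ℝ v (y - x) : ℝ) ≤ ζ y}

/-- Directional derivative of a convex function, as the support function of the
subdifferential: `ζ'(x; d) = max {⟨v, d⟩ : v ∈ ∂ζ(x)}`. -/
noncomputable def dirDerivSub (ζ : EuclideanSpace ℝ (Fin n) → ℝ)
    (x d : EuclideanSpace ℝ (Fin n)) : ℝ :=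
  sSup {r : ℝ | ∃ v ∈ subdiff ζ x, r = (inner ℝ v d : ℝ)}

/-- Normal cone of a convex set `X` at `x`. -/
def normalCone (X : Set (EuclideanSpace ℝ (Fin n))) (x : EuclideanSpace ℝ (Fin n)) :
    Set (EuclideanSpace ℝ (Fin n)) :=
  {v | ∀ y ∈ X, (inner ℝ v (y - x) : ℝ) ≤ 0}

/-- Tangent cone of a convex set `X` at `x`: closure of the cone of feasible directions. -/
def tangentConeConvex (X : Set (EuclideanSpace ℝ (Fin n))) (x : EuclideanSpace ℝ (Fin n)) :
    Set (EuclideanSpace ℝ (Fin n)) :=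
  closure {d | ∃ τ : ℝ, 0 ≤ τ ∧ ∃ y ∈ X, d = τ • (y - x)}

/-- Polar cone. -/
def polarCone (S : Set (EuclideanSpace ℝ (Fin n))) : Set (EuclideanSpace ℝ (Fin n)) :=
  {d | ∀ u ∈ S, (inner ℝ u d : ℝ) ≤ 0}

/-- The cone `P` of aggregated subgradients plus normal directions. -/
def Pcone {ι : Type} [Fintype ι] (g : ι → EuclideanSpace ℝ (Fin n))
    (ζ : ι → EuclideanSpace ℝ (Fin n) → ℝ) (X : Set (EuclideanSpace ℝ (Fin n)))
    (xbar : EuclideanSpace ℝ (Fin n)) : Set (EuclideanSpace ℝ (Fin n)) :=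
  {u | ∃ (lam : ι → ℝ) (v : ι → EuclideanSpace ℝ (Fin n)) (w : EuclideanSpace ℝ (Fin n)),
    (∀ i, 0 ≤ lam i) ∧ (∀ i, v i ∈ subdiff (ζ i) xbar) ∧ w ∈ normalCone X xbar ∧
    u = (∑ i, lam i • (g i + v i)) + w}

/-- The linearized cone `C`. -/
noncomputable def Ccone {ι : Type} [Fintype ι] (g : ι → EuclideanSpace ℝ (Fin n))
    (ζ : ι → EuclideanSpace ℝ (Fin n) → ℝ) (X : Set (EuclideanSpace ℝ (Fin n)))
    (xbar : EuclideanSpace ℝ (Fin n)) : Set (EuclideanSpace ℝ (Fin n)) :=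
  {d | d ∈ tangentConeConvex X xbar ∧
    ∀ i, (inner ℝ (g i) d : ℝ) + dirDerivSub (ζ i) xbar d ≤ 0}


open Metric

local notation "E" => EuclideanSpace ℝ (Fin n)


lemma subdiff_convex (ζ : E → ℝ) (x : E) : Convex ℝ (subdiff ζ x) := by
  intro v hv v' hv' a b ha hb hab y
  have h1 := hv y
  have h2 := hv' y
  have hin : (inner ℝ (a • v + b • v') (y - x) : ℝ)
      = a * inner ℝ v (y - x) + b * inner ℝ v' (y - x) := by
    rw [inner_add_left, real_inner_smul_left, real_inner_smul_left]
  rw [hin]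
  have e : a * ζ x + b * ζ x = ζ x := by rw [← add_mul, hab, one_mul]
  have ey : a * ζ y + b * ζ y = ζ y := by rw [← add_mul, hab, one_mul]
  nlinarith [mul_le_mul_of_nonneg_left h1 ha, mul_le_mul_of_nonneg_left h2 hb]

lemma subdiff_isClosed (ζ : E → ℝ) (x : E) : IsClosed (subdiff ζ x) := by
  have h : subdiff ζ x = ⋂ y, {v : E | ζ x + (inner ℝ v (y - x) : ℝ) ≤ ζ y} := by
    ext v; simp [subdiff]
  rw [h]
  exact isClosed_iInter fun y =>
    isClosed_le (continuous_const.add (continuous_id.inner continuous_const)) continuous_const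

lemma convexOn_continuous {ζ : E → ℝ} (hζ : ConvexOn ℝ univ ζ) : Continuous ζ := by
  rw [← continuousOn_univ]
  exact hζ.continuousOn isOpen_univ

lemma subdiff_nonempty {ζ : E → ℝ} (hζ : ConvexOn ℝ univ ζ) (x : E) :
    (subdiff ζ x).Nonempty := by
  classical
  have hcont : Continuous ζ := convexOn_continuous hζ
  set A : Set ((EuclideanSpace ℝ (Fin n)) × ℝ) := {p | ζ p.1 < p.2} with hA
  have hAopen : IsOpen A := isOpen_lt (hcont.comp continuous_fst) continuous_snd
  have hAconv : Convex ℝ A := by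
    rintro ⟨y, t⟩ hyt ⟨y', t'⟩ hyt' a b ha hb hab
    simp only [hA, mem_setOf_eq] at hyt hyt' ⊢
    have h := hζ.2 (mem_univ y) (mem_univ y') ha hb hab
    simp only [smul_eq_mul] at h
    rcases eq_or_lt_of_le ha with rfl | ha'
    · have hb1 : b = 1 := by linarith
      subst hb1
      simpa using hyt'
    · have hstep : a * ζ y < a * t := (mul_lt_mul_iff_right₀ ha').mpr hyt
      have h2 : b * ζ y' ≤ b * t' := mul_le_mul_of_nonneg_left hyt'.le hb
      calc ζ (a • (y, t).1 + b • (y', t').1) ≤ a * ζ y + b * ζ y' := h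
        _ < a * t + b * t' := by linarith
  have hxA : (x, ζ x) ∉ A := by simp [hA]
  obtain ⟨f, hf⟩ := geometric_hahn_banach_open_point hAconv hAopen hxA
  set c : ℝ := f (0, 1) with hc
  have hlin : ∀ (y : E) (t : ℝ), f (y, t) = f (y, 0) + t * c := by
    intro y t
    have hyt : ((y, t) : (EuclideanSpace ℝ (Fin n)) × ℝ)
        = (y, (0:ℝ)) + t • ((0 : EuclideanSpace ℝ (Fin n)), (1:ℝ)) := by
      simp [Prod.ext_iff]
    rw [hyt, map_add, map_smul]; simp [hc, mul_comm]
  have hcneg : c < 0 := by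
    have := hf (x, ζ x + 1) (by simp [hA])
    rw [hlin x (ζ x + 1), hlin x (ζ x)] at this
    nlinarith
  have hcpos : (0:ℝ) < -c := by linarith
  have key : ∀ y : E, f (y, 0) + ζ y * c ≤ f (x, 0) + ζ x * c := by
    intro y
    refine le_of_forall_pos_le_add fun ε hε => ?_
    have hmem : ((y, ζ y + ε / (-c)) : (EuclideanSpace ℝ (Fin n)) × ℝ) ∈ A := by
      simp only [hA, mem_setOf_eq]
      have : 0 < ε / (-c) := div_pos hε hcpos
      linarith
    have h5 := hf _ hmem
    rw [hlin y _, hlin x _] at h5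
    have he : (ζ y + ε / (-c)) * c = ζ y * c - ε := by
      rw [add_mul, div_mul_eq_mul_div, div_neg, mul_div_assoc, div_self hcneg.ne]; ring
    linarith [he ▸ h5]
  set L : (EuclideanSpace ℝ (Fin n)) →L[ℝ] ℝ :=
    f.comp (ContinuousLinearMap.inl ℝ (EuclideanSpace ℝ (Fin n)) ℝ) with hL
  have hLdef : ∀ z : E, L z = f (z, 0) := fun z => rfl
  set v : E := (InnerProductSpace.toDual ℝ (EuclideanSpace ℝ (Fin n))).symm ((-c)⁻¹ • L) with hv
  refine ⟨v, fun y => ?_⟩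
  have hinner : (inner ℝ v (y - x) : ℝ) = (-c)⁻¹ * (L (y - x)) := by
    rw [hv, InnerProductSpace.toDual_symm_apply]
    simp
  have hLsub : L (y - x) = f (y, 0) - f (x, 0) := by rw [map_sub, hLdef, hLdef]
  rw [hinner, hLsub]
  have h1 : f (y, 0) - f (x, 0) ≤ (ζ y - ζ x) * (-c) := by nlinarith [key y]
  have h2 : (-c)⁻¹ * (f (y, 0) - f (x, 0)) ≤ (-c)⁻¹ * ((ζ y - ζ x) * (-c)) :=
    mul_le_mul_of_nonneg_left h1 (by positivity)
  have h3 : (-c)⁻¹ * ((ζ y - ζ x) * (-c)) = ζ y - ζ x := by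
    rw [mul_comm, mul_assoc, mul_inv_cancel₀ (ne_of_gt hcpos), mul_one]
  linarith [h3 ▸ h2]


lemma subdiff_isCompact {ζ : E → ℝ} (hζ : ConvexOn ℝ univ ζ) (x : E) :
    IsCompact (subdiff ζ x) := by
  have hcont : Continuous ζ := convexOn_continuous hζ
  -- bound : ζ is bounded above on closedBall x 1
  obtain ⟨z, -, hz'⟩ := (isCompact_closedBall x 1).exists_isMaxOn
    ⟨x, mem_closedBall_self zero_le_one⟩ hcont.continuousOn
  have hz : ∀ y ∈ closedBall x 1, ζ y ≤ ζ z := fun y hy => hz' hy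
  set M : ℝ := ζ z - ζ x with hM
  have hbdd : subdiff ζ x ⊆ closedBall 0 (max M 0) := by
    intro v hv
    rw [mem_closedBall_zero_iff]
    rcases eq_or_ne v 0 with rfl | hv0
    · simpa using le_max_right M 0
    · have hnv : (0:ℝ) < ‖v‖ := norm_pos_iff.mpr hv0
      have hy := hv (x + ‖v‖⁻¹ • v)
      have hin : (inner ℝ v ((x + ‖v‖⁻¹ • v) - x) : ℝ) = ‖v‖ := by
        rw [add_sub_cancel_left, real_inner_smul_right, real_inner_self_eq_norm_sq]
        field_simp
      rw [hin] at hy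
      have hball : x + ‖v‖⁻¹ • v ∈ closedBall x 1 := by
        rw [mem_closedBall_iff_norm, add_sub_cancel_left, norm_smul, norm_inv, norm_norm]
        rw [inv_mul_cancel₀ (ne_of_gt hnv)]
      have := hz _ hball
      have : ‖v‖ ≤ M := by rw [hM]; linarith
      exact le_trans this (le_max_left M 0)
  exact (isCompact_closedBall 0 (max M 0)).of_isClosed_subset (subdiff_isClosed ζ x) hbdd

lemma dirDeriv_isGreatest {ζ : E → ℝ} (hζ : ConvexOn ℝ univ ζ) (x d : E) :
    IsGreatest {r : ℝ | ∃ v ∈ subdiff ζ x, r = (inner ℝ v d : ℝ)} (dirDerivSub ζ x d) := by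
  have hset : {r : ℝ | ∃ v ∈ subdiff ζ x, r = (inner ℝ v d : ℝ)}
      = (fun v : E => (inner ℝ v d : ℝ)) '' subdiff ζ x := by
    ext r; simp [eq_comm]
  obtain ⟨v0, hv0, hmax'⟩ := (subdiff_isCompact hζ x).exists_isMaxOn (subdiff_nonempty hζ x)
    (f := fun v : EuclideanSpace ℝ (Fin n) => (inner ℝ v d : ℝ))
    ((continuous_id.inner continuous_const).continuousOn)
  have hmax : ∀ v ∈ subdiff ζ x, (inner ℝ v d : ℝ) ≤ inner ℝ v0 d := fun v hv => hmax' hv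
  have hg : IsGreatest {r : ℝ | ∃ v ∈ subdiff ζ x, r = (inner ℝ v d : ℝ)} (inner ℝ v0 d : ℝ) := by
    constructor
    · exact ⟨v0, hv0, rfl⟩
    · rintro r ⟨v, hv, rfl⟩; exact hmax v hv
  rw [dirDerivSub, hg.csSup_eq]
  exact hg

lemma inner_le_dirDeriv {ζ : E → ℝ} (hζ : ConvexOn ℝ univ ζ) {x d v : E}
    (hv : v ∈ subdiff ζ x) : (inner ℝ v d : ℝ) ≤ dirDerivSub ζ x d :=
  (dirDeriv_isGreatest hζ x d).2 ⟨v, hv, rfl⟩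


/-- Generic bipolar theorem for nonempty closed convex cones. -/
lemma polar_polar_eq (K : ConvexCone ℝ (EuclideanSpace ℝ (Fin n)))
    (hne : (K : Set (EuclideanSpace ℝ (Fin n))).Nonempty)
    (hc : IsClosed (K : Set (EuclideanSpace ℝ (Fin n)))) :
    polarCone (polarCone (K : Set (EuclideanSpace ℝ (Fin n)))) = K := by
  have h0 : (0 : E) ∈ (K : Set E) := by
    obtain ⟨k, hk⟩ := hne
    have ht : Filter.Tendsto (fun t : ℝ => t • k) (nhdsWithin 0 (Ioi 0)) (nhds 0) := by
      have : Filter.Tendsto (fun t : ℝ => t • k) (nhds 0) (nhds ((0:ℝ) • k)) :=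
        (continuous_id.smul continuous_const).tendsto 0
      rw [zero_smul] at this
      exact this.mono_left nhdsWithin_le_nhds
    exact hc.mem_of_tendsto ht
      (eventually_nhdsWithin_of_forall fun t (htp : (0:ℝ) < t) => K.smul_mem htp hk)
  ext d
  constructor
  · intro hd
    by_contra hdK
    obtain ⟨f, u, hfK, hfd⟩ := geometric_hahn_banach_closed_point K.convex hc hdK
    have hu0 : 0 < u := by simpa using hfK 0 h0
    have hfle : ∀ a ∈ (K : Set E), f a ≤ 0 := by
      intro a ha
      by_contra hpos
      push_neg at hpos
      have hmem : (u / f a) • a ∈ (K : Set E) := K.smul_mem (div_pos hu0 hpos) ha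
      have := hfK _ hmem
      rw [map_smul, smul_eq_mul, div_mul_cancel₀ _ hpos.ne'] at this
      exact lt_irrefl _ this
    set y := (InnerProductSpace.toDual ℝ E).symm f
    have hy : ∀ z, (inner ℝ y z : ℝ) = f z := fun z => InnerProductSpace.toDual_symm_apply
    have hyP : y ∈ polarCone (K : Set E) := fun a ha => by
      rw [real_inner_comm, hy]; exact hfle a ha
    have := hd y hyP
    rw [hy] at this
    linarith
  · intro hd y hy
    rw [real_inner_comm]
    exact hy d hd

lemma polarCone_closure (S : Set (EuclideanSpace ℝ (Fin n))) :
    polarCone (closure S) = polarCone S := by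
  ext d
  constructor
  · intro hd u hu; exact hd u (subset_closure hu)
  · intro hd u hu
    have hcl : closure S ⊆ {u : EuclideanSpace ℝ (Fin n) | (inner ℝ u d : ℝ) ≤ 0} := by
      refine closure_minimal hd ?_
      exact isClosed_le (continuous_id.inner continuous_const) continuous_const
    exact hcl hu

section tangent
variable {X : Set (EuclideanSpace ℝ (Fin n))} {x : EuclideanSpace ℝ (Fin n)}

/-- The cone of feasible directions as a ConvexCone. -/
noncomputable def feasCone (hX : Convex ℝ X) (hx : x ∈ X) : ConvexCone ℝ (EuclideanSpace ℝ (Fin n)) where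
  carrier := {d | ∃ τ : ℝ, 0 ≤ τ ∧ ∃ y ∈ X, d = τ • (y - x)}
  smul_mem' := by
    rintro c hc d ⟨τ, hτ, y, hy, rfl⟩
    exact ⟨c * τ, by positivity, y, hy, smul_smul c τ _⟩
  add_mem' := by
    rintro d ⟨τ, hτ, y, hy, rfl⟩ d' ⟨τ', hτ', y', hy', rfl⟩
    rcases eq_or_lt_of_le (add_nonneg hτ hτ' : (0:ℝ) ≤ τ + τ') with heq | hpos
    · have hτ0 : τ = 0 := by linarith
      have hτ'0 : τ' = 0 := by linarith
      refine ⟨0, le_refl 0, x, hx, ?_⟩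
      simp [hτ0, hτ'0]
    · set s := τ + τ' with hs
      set θ := τ / s with hθ
      have hθ0 : 0 ≤ θ := by positivity
      have hθ1 : θ ≤ 1 := by
        rw [hθ, div_le_one hpos]; linarith
      set z := θ • y + (1 - θ) • y' with hz
      have hzX : z ∈ X := hX hy hy' hθ0 (by linarith) (by ring)
      refine ⟨s, le_of_lt hpos, z, hzX, ?_⟩
      have h1 : s * θ = τ := by rw [hθ]; field_simp
      have h2 : s * (1 - θ) = τ' := by rw [hθ]; field_simp; ring
      rw [hz, ← h1, ← h2]
      module
end tangent
section tangent2
variable {X : Set (EuclideanSpace ℝ (Fin n))} {x : EuclideanSpace ℝ (Fin n)}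

lemma tangent_eq_closure_feas (hX : Convex ℝ X) (hx : x ∈ X) :
    tangentConeConvex X x = closure (feasCone hX hx : Set (EuclideanSpace ℝ (Fin n))) := rfl

lemma zero_mem_feas (hX : Convex ℝ X) (hx : x ∈ X) :
    (0 : EuclideanSpace ℝ (Fin n)) ∈ (feasCone hX hx : Set (EuclideanSpace ℝ (Fin n))) :=
  ⟨0, le_refl 0, x, hx, by simp⟩

lemma zero_mem_tangent (hX : Convex ℝ X) (hx : x ∈ X) :
    (0 : EuclideanSpace ℝ (Fin n)) ∈ tangentConeConvex X x := by
  rw [tangent_eq_closure_feas hX hx]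
  exact subset_closure (zero_mem_feas hX hx)

lemma tangent_isClosed : IsClosed (tangentConeConvex X x) := isClosed_closure

/-- normal cone is the polar of the tangent cone -/
lemma normalCone_eq_polar_tangent :
    normalCone X x = polarCone (tangentConeConvex X x) := by
  ext w
  constructor
  · intro hw
    intro u hu
    rw [tangentConeConvex] at hu
    have hsub : {d : EuclideanSpace ℝ (Fin n) | ∃ τ : ℝ, 0 ≤ τ ∧ ∃ y ∈ X, d = τ • (y - x)}
        ⊆ {d : EuclideanSpace ℝ (Fin n) | (inner ℝ d w : ℝ) ≤ 0} := by
      rintro d ⟨τ, hτ, y, hy, rfl⟩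
      rw [mem_setOf_eq, real_inner_smul_left]
      have := hw y hy
      rw [real_inner_comm] at this
      exact mul_nonpos_of_nonneg_of_nonpos hτ this
    have hcl : closure {d : EuclideanSpace ℝ (Fin n) | ∃ τ : ℝ, 0 ≤ τ ∧ ∃ y ∈ X, d = τ • (y - x)}
        ⊆ {d : EuclideanSpace ℝ (Fin n) | (inner ℝ d w : ℝ) ≤ 0} :=
      closure_minimal hsub (isClosed_le (continuous_id.inner continuous_const) continuous_const)
    exact hcl hu
  · intro hw y hy
    have hmem : y - x ∈ tangentConeConvex X x := by
      rw [tangentConeConvex]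
      exact subset_closure ⟨1, zero_le_one, y, hy, (one_smul ℝ _).symm⟩
    have := hw _ hmem
    rwa [real_inner_comm] at this

lemma inner_nonpos_of_normal_tangent {w d : EuclideanSpace ℝ (Fin n)}
    (hw : w ∈ normalCone X x) (hd : d ∈ tangentConeConvex X x) : (inner ℝ w d : ℝ) ≤ 0 := by
  rw [normalCone_eq_polar_tangent] at hw
  rw [real_inner_comm]
  exact hw d hd

lemma polar_normalCone (hX : Convex ℝ X) (hx : x ∈ X) :
    polarCone (normalCone X x) = tangentConeConvex X x := by
  rw [normalCone_eq_polar_tangent (X := X) (x := x)]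
  have := polar_polar_eq ((feasCone hX hx).closure)
    ⟨0, by rw [ConvexCone.coe_closure]; exact subset_closure (zero_mem_feas hX hx)⟩
    (by rw [ConvexCone.coe_closure]; exact isClosed_closure)
  rw [ConvexCone.coe_closure] at this
  exact this

lemma normalCone_smul {c : ℝ} (hc : 0 ≤ c) {w : EuclideanSpace ℝ (Fin n)}
    (hw : w ∈ normalCone X x) : c • w ∈ normalCone X x := by
  intro y hy
  rw [real_inner_smul_left]
  exact mul_nonpos_of_nonneg_of_nonpos hc (hw y hy)

lemma normalCone_add {w w' : EuclideanSpace ℝ (Fin n)}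
    (hw : w ∈ normalCone X x) (hw' : w' ∈ normalCone X x) : w + w' ∈ normalCone X x := by
  intro y hy
  rw [inner_add_left]
  exact add_nonpos (hw y hy) (hw' y hy)

lemma normalCone_zero : (0 : EuclideanSpace ℝ (Fin n)) ∈ normalCone X x := by
  intro y hy; simp

lemma normalCone_isClosed : IsClosed (normalCone X x) := by
  have h : normalCone X x = ⋂ y ∈ X, {v : EuclideanSpace ℝ (Fin n) | (inner ℝ v (y - x) : ℝ) ≤ 0} := by
    ext v; simp [normalCone]
  rw [h]
  exact isClosed_biInter fun y _ =>
    isClosed_le (continuous_id.inner continuous_const) continuous_const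

end tangent2


section pcone
variable {ι : Type} [Fintype ι] {g : ι → EuclideanSpace ℝ (Fin n)}
  {ζ : ι → EuclideanSpace ℝ (Fin n) → ℝ} {X : Set (EuclideanSpace ℝ (Fin n))}
  {xbar : EuclideanSpace ℝ (Fin n)}

lemma Pcone_smul {c : ℝ} (hc : 0 ≤ c) {u : EuclideanSpace ℝ (Fin n)}
    (hu : u ∈ Pcone g ζ X xbar) : c • u ∈ Pcone g ζ X xbar := by
  obtain ⟨lam, v, w, hlam, hv, hw, rfl⟩ := hu
  refine ⟨fun i => c * lam i, v, c • w, fun i => mul_nonneg hc (hlam i), hv,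
    normalCone_smul hc hw, ?_⟩
  rw [smul_add, Finset.smul_sum]
  congr 1
  refine Finset.sum_congr rfl fun i _ => ?_
  rw [smul_smul]

lemma Pcone_add {u u' : EuclideanSpace ℝ (Fin n)}
    (hu : u ∈ Pcone g ζ X xbar) (hu' : u' ∈ Pcone g ζ X xbar) :
    u + u' ∈ Pcone g ζ X xbar := by
  classical
  obtain ⟨lam, v, w, hlam, hv, hw, rfl⟩ := hu
  obtain ⟨lam', v', w', hlam', hv', hw', rfl⟩ := hu'
  set lam'' : ι → ℝ := fun i => lam i + lam' i with hlam''def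
  set v'' : ι → EuclideanSpace ℝ (Fin n) := fun i =>
    if h : lam'' i = 0 then v i
    else (lam'' i)⁻¹ • (lam i • v i + lam' i • v' i) with hv''def
  refine ⟨lam'', v'', w + w', fun i => add_nonneg (hlam i) (hlam' i), ?_, normalCone_add hw hw', ?_⟩
  · intro i
    by_cases h : lam'' i = 0
    · simp only [hv''def, h, dif_pos]
      exact hv i
    · simp only [hv''def, dif_neg h]
      have hpos : 0 < lam'' i := lt_of_le_of_ne (add_nonneg (hlam i) (hlam' i)) (Ne.symm h)
      have ha : 0 ≤ lam i / lam'' i := div_nonneg (hlam i) hpos.le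
      have hb : 0 ≤ lam' i / lam'' i := div_nonneg (hlam' i) hpos.le
      have hab : lam i / lam'' i + lam' i / lam'' i = 1 := by
        rw [← add_div, hlam''def]
        exact div_self h
      have := subdiff_convex (ζ i) xbar (hv i) (hv' i) ha hb hab
      have heq : (lam i / lam'' i) • v i + (lam' i / lam'' i) • v' i
          = (lam'' i)⁻¹ • (lam i • v i + lam' i • v' i) := by
        rw [smul_add, smul_smul, smul_smul, div_eq_inv_mul, div_eq_inv_mul]
      rwa [heq] at this
  · have hterm : ∀ i, lam'' i • (g i + v'' i)
        = lam i • (g i + v i) + lam' i • (g i + v' i) := by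
      intro i
      by_cases h : lam'' i = 0
      · have h1 : lam i = 0 := by
          have := hlam i; have := hlam' i
          have : lam i + lam' i = 0 := h
          linarith [hlam i, hlam' i]
        have h2 : lam' i = 0 := by
          have : lam i + lam' i = 0 := h
          linarith [hlam i, hlam' i]
        simp [h, h1, h2]
      · simp only [hv''def, dif_neg h]
        rw [smul_add, smul_inv_smul₀ h]
        simp only [smul_add]
        have hii : lam'' i = lam i + lam' i := rfl
        rw [hii, add_smul]
        abel
    calc (∑ i, lam i • (g i + v i)) + w + ((∑ i, lam' i • (g i + v' i)) + w')
        = (∑ i, (lam i • (g i + v i) + lam' i • (g i + v' i))) + (w + w') := by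
          rw [Finset.sum_add_distrib]; abel
      _ = (∑ i, lam'' i • (g i + v'' i)) + (w + w') := by
          rw [Finset.sum_congr rfl fun i _ => (hterm i).symm]

lemma Pcone_zero_mem (hζ : ∀ i, ConvexOn ℝ univ (ζ i)) :
    (0 : EuclideanSpace ℝ (Fin n)) ∈ Pcone g ζ X xbar := by
  refine ⟨fun _ => 0, fun i => (subdiff_nonempty (hζ i) xbar).choose, 0,
    fun _ => le_refl 0, fun i => (subdiff_nonempty (hζ i) xbar).choose_spec,
    normalCone_zero, by simp⟩

/-- `Pcone` as a `ConvexCone`. -/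
noncomputable def PconvexCone (g : ι → EuclideanSpace ℝ (Fin n))
    (ζ : ι → EuclideanSpace ℝ (Fin n) → ℝ) (X : Set (EuclideanSpace ℝ (Fin n)))
    (xbar : EuclideanSpace ℝ (Fin n)) : ConvexCone ℝ (EuclideanSpace ℝ (Fin n)) where
  carrier := Pcone g ζ X xbar
  smul_mem' := fun _ hc _ hu => Pcone_smul (le_of_lt hc) hu
  add_mem' := fun _ hu _ hu' => Pcone_add hu hu'

end pcone
section closedness
variable {ι : Type} [Fintype ι] {g : ι → EuclideanSpace ℝ (Fin n)}
  {ζ : ι → EuclideanSpace ℝ (Fin n) → ℝ} {X : Set (EuclideanSpace ℝ (Fin n))}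
  {xbar : EuclideanSpace ℝ (Fin n)}

lemma Pcone_isClosed (hζ : ∀ i, ConvexOn ℝ univ (ζ i))
    (hslater : ∃ dbar ∈ tangentConeConvex X xbar,
      ∀ i, (inner ℝ (g i) dbar : ℝ) + dirDerivSub (ζ i) xbar dbar < 0) :
    IsClosed (Pcone g ζ X xbar) := by
  classical
  obtain ⟨dbar, hdbar, hsl⟩ := hslater
  set c : ι → ℝ := fun i => -((inner ℝ (g i) dbar : ℝ) + dirDerivSub (ζ i) xbar dbar) with hcdef
  have hc : ∀ i, 0 < c i := fun i => by
    have := hsl i; simp only [hcdef]; linarith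
  have hrad : ∀ i : ι, ∃ r : ℝ, 0 ≤ r ∧ subdiff (ζ i) xbar ⊆ closedBall 0 r := by
    intro i
    obtain ⟨r, hr⟩ := (subdiff_isCompact (hζ i) xbar).isBounded.subset_closedBall 0
    exact ⟨max r 0, le_max_right _ _, hr.trans (closedBall_subset_closedBall (le_max_left _ _))⟩
  choose r hr0 hrsub using hrad
  refine isClosed_of_closure_subset ?_
  intro u hu
  set R : ℝ := ‖u‖ + 1 with hRdef
  have hR0 : 0 < R := by have := norm_nonneg u; rw [hRdef]; linarith
  have hstep : u ∈ closure (Pcone g ζ X xbar ∩ closedBall 0 R) := by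
    rw [_root_.mem_closure_iff] at hu ⊢
    intro o ho hxo
    obtain ⟨y, ⟨hyo, hyb⟩, hyP⟩ := hu (o ∩ ball 0 R) (ho.inter isOpen_ball)
      ⟨hxo, by rw [mem_ball_zero_iff]; rw [hRdef]; linarith⟩
    exact ⟨y, hyo, hyP, ball_subset_closedBall hyb⟩
  set Λ : Set (ι → ℝ) := univ.pi (fun i => Icc 0 (R * ‖dbar‖ / c i)) with hΛdef
  set V : Set (ι → EuclideanSpace ℝ (Fin n)) := univ.pi (fun i => subdiff (ζ i) xbar) with hVdef
  set R' : ℝ := R + ∑ i, (R * ‖dbar‖ / c i) * (‖g i‖ + r i) with hR'def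
  set W : Set (EuclideanSpace ℝ (Fin n)) := normalCone X xbar ∩ closedBall 0 R' with hWdef
  set F : (ι → ℝ) × (ι → EuclideanSpace ℝ (Fin n)) × EuclideanSpace ℝ (Fin n)
      → EuclideanSpace ℝ (Fin n) :=
    fun p => (∑ i, p.1 i • (g i + p.2.1 i)) + p.2.2 with hFdef
  have hcomp : IsCompact (Λ ×ˢ (V ×ˢ W)) := by
    refine IsCompact.prod (isCompact_univ_pi fun i => isCompact_Icc)
      (IsCompact.prod (isCompact_univ_pi fun i => subdiff_isCompact (hζ i) xbar) ?_)
    exact (isCompact_closedBall 0 R').inter_left normalCone_isClosed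
  have hcont : Continuous F := by
    refine Continuous.add ?_ (continuous_snd.comp continuous_snd)
    refine continuous_finset_sum _ fun i _ => ?_
    exact ((continuous_apply i).comp continuous_fst).smul
      (continuous_const.add ((continuous_apply i).comp (continuous_fst.comp continuous_snd)))
  have himg_sub : F '' (Λ ×ˢ (V ×ˢ W)) ⊆ Pcone g ζ X xbar := by
    rintro _ ⟨⟨lam, v, w⟩, ⟨hlam, hv, hw⟩, rfl⟩
    exact ⟨lam, v, w, fun i => (hlam i (mem_univ i)).1, fun i => hv i (mem_univ i), hw.1, rfl⟩
  have hsub_img : Pcone g ζ X xbar ∩ closedBall 0 R ⊆ F '' (Λ ×ˢ (V ×ˢ W)) := by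
    rintro u' ⟨⟨lam, v, w, hlam, hv, hw, rfl⟩, hball⟩
    set u' := (∑ i, lam i • (g i + v i)) + w with hu'def
    have hnorm : ‖u'‖ ≤ R := mem_closedBall_zero_iff.mp hball
    -- key inner ℝ product estimate
    have hvd : ∀ i, (inner ℝ (v i) dbar : ℝ) ≤ dirDerivSub (ζ i) xbar dbar :=
      fun i => inner_le_dirDeriv (hζ i) (hv i)
    have hwd : (inner ℝ w dbar : ℝ) ≤ 0 := inner_nonpos_of_normal_tangent hw hdbar
    have hterm : ∀ i, lam i * ((inner ℝ (g i) dbar : ℝ) + inner ℝ (v i) dbar) ≤ lam i * (-(c i)) := by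
      intro i
      refine mul_le_mul_of_nonneg_left ?_ (hlam i)
      have := hvd i
      simp only [hcdef]
      linarith
    have hinner_eq : (inner ℝ u' dbar : ℝ)
        = (∑ i, lam i * ((inner ℝ (g i) dbar : ℝ) + inner ℝ (v i) dbar)) + inner ℝ w dbar := by
      rw [hu'def, inner_add_left, sum_inner]
      congr 1
      refine Finset.sum_congr rfl fun i _ => ?_
      rw [real_inner_smul_left, inner_add_left]
    have hkey : ∑ i, lam i * c i ≤ R * ‖dbar‖ := by
      have hsum_le : ∑ i, lam i * ((inner ℝ (g i) dbar : ℝ) + inner ℝ (v i) dbar)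
          ≤ ∑ i, lam i * (-(c i)) := Finset.sum_le_sum (fun i _ => hterm i)
      have h1 : (inner ℝ u' dbar : ℝ) ≤ ∑ i, lam i * (-(c i)) := by
        rw [hinner_eq]; linarith
      have h2 : ∑ i, lam i * (-(c i)) = -(∑ i, lam i * c i) := by
        rw [← Finset.sum_neg_distrib]
        exact Finset.sum_congr rfl fun i _ => by ring
      have h3 : -(‖u'‖ * ‖dbar‖) ≤ (inner ℝ u' dbar : ℝ) := by
        have := real_inner_le_norm (-u') dbar
        rw [inner_neg_left, norm_neg] at this
        linarith
      have h4 : ‖u'‖ * ‖dbar‖ ≤ R * ‖dbar‖ :=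
        mul_le_mul_of_nonneg_right hnorm (norm_nonneg _)
      rw [h2] at h1
      linarith
    have hlam_bd : ∀ i, lam i ≤ R * ‖dbar‖ / c i := by
      intro i
      rw [le_div_iff₀ (hc i)]
      calc lam i * c i ≤ ∑ j, lam j * c j := by
            exact Finset.single_le_sum (f := fun j => lam j * c j)
              (fun j _ => mul_nonneg (hlam j) (hc j).le) (Finset.mem_univ i)
        _ ≤ R * ‖dbar‖ := hkey
    have hwnorm : ‖w‖ ≤ R' := by
      have hweq : w = u' - ∑ i, lam i • (g i + v i) := by rw [hu'def]; abel
      have h5 : ‖∑ i, lam i • (g i + v i)‖ ≤ ∑ i, (R * ‖dbar‖ / c i) * (‖g i‖ + r i) := by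
        refine le_trans (norm_sum_le _ _) (Finset.sum_le_sum fun i _ => ?_)
        rw [norm_smul, Real.norm_eq_abs, abs_of_nonneg (hlam i)]
        refine mul_le_mul (hlam_bd i) ?_ (norm_nonneg _) ?_
        · refine le_trans (norm_add_le _ _) ?_
          have : ‖v i‖ ≤ r i := mem_closedBall_zero_iff.mp (hrsub i (hv i))
          linarith
        · have := hc i
          positivity
      calc ‖w‖ = ‖u' - ∑ i, lam i • (g i + v i)‖ := by rw [← hweq]
        _ ≤ ‖u'‖ + ‖∑ i, lam i • (g i + v i)‖ := norm_sub_le _ _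
        _ ≤ R + ∑ i, (R * ‖dbar‖ / c i) * (‖g i‖ + r i) := add_le_add hnorm h5
        _ = R' := by rw [hR'def]
    refine ⟨⟨lam, v, w⟩, ⟨?_, ?_, hw, mem_closedBall_zero_iff.mpr hwnorm⟩, rfl⟩
    · intro i _
      exact ⟨hlam i, hlam_bd i⟩
    · intro i _
      exact hv i
  have hclos : closure (Pcone g ζ X xbar ∩ closedBall 0 R) ⊆ F '' (Λ ×ˢ (V ×ˢ W)) :=
    closure_minimal hsub_img (hcomp.image hcont).isClosed
  exact himg_sub (hclos hstep)

end closedness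
section main
variable {ι : Type} [Fintype ι] {g : ι → EuclideanSpace ℝ (Fin n)}
  {ζ : ι → EuclideanSpace ℝ (Fin n) → ℝ} {X : Set (EuclideanSpace ℝ (Fin n))}
  {xbar : EuclideanSpace ℝ (Fin n)}

lemma polar_Pcone_eq_Ccone (hζ : ∀ i, ConvexOn ℝ univ (ζ i)) (hXconv : Convex ℝ X)
    (hxbar : xbar ∈ X) :
    polarCone (Pcone g ζ X xbar) = Ccone g ζ X xbar := by
  classical
  ext d
  constructor
  · intro hd
    constructor
    · rw [← polar_normalCone hXconv hxbar]
      intro w hw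
      refine hd w ⟨fun _ => 0, fun i => (subdiff_nonempty (hζ i) xbar).choose, w,
        fun _ => le_refl 0, fun i => (subdiff_nonempty (hζ i) xbar).choose_spec, hw, by simp⟩
    · intro i
      obtain ⟨vstar, hvstar, heq⟩ := (dirDeriv_isGreatest (hζ i) xbar d).1
      set lam : ι → ℝ := fun j => if j = i then 1 else 0 with hlamdef
      set v : ι → EuclideanSpace ℝ (Fin n) := fun j =>
        if j = i then vstar else (subdiff_nonempty (hζ j) xbar).choose with hvdef
      have hmem : g i + vstar ∈ Pcone g ζ X xbar := by
        refine ⟨lam, v, 0, ?_, ?_, normalCone_zero, ?_⟩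
        · intro j; by_cases h : j = i <;> simp [hlamdef, h]
        · intro j
          by_cases h : j = i
          · subst h; simp only [hvdef, if_pos rfl]; exact hvstar
          · simp only [hvdef, if_neg h]
            exact (subdiff_nonempty (hζ j) xbar).choose_spec
        · rw [add_zero]
          rw [Finset.sum_eq_single_of_mem i (Finset.mem_univ i)
            (fun j _ hji => by simp [hlamdef, hji])]
          simp [hlamdef, hvdef]
      have := hd _ hmem
      rw [inner_add_left] at this
      rw [heq]
      linarith
  · rintro ⟨hdT, hdC⟩ u ⟨lam, v, w, hlam, hv, hw, rfl⟩
    have hinner_eq : (inner ℝ ((∑ i, lam i • (g i + v i)) + w) d : ℝ)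
        = (∑ i, lam i * ((inner ℝ (g i) d : ℝ) + inner ℝ (v i) d)) + inner ℝ w d := by
      rw [inner_add_left, sum_inner]
      congr 1
      refine Finset.sum_congr rfl fun i _ => ?_
      rw [real_inner_smul_left, inner_add_left]
    rw [hinner_eq]
    have hterm : ∀ i, lam i * ((inner ℝ (g i) d : ℝ) + inner ℝ (v i) d) ≤ 0 := by
      intro i
      refine mul_nonpos_of_nonneg_of_nonpos (hlam i) ?_
      have h1 : (inner ℝ (v i) d : ℝ) ≤ dirDerivSub (ζ i) xbar d :=
        inner_le_dirDeriv (hζ i) (hv i)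
      have h2 := hdC i
      linarith
    have hsum : ∑ i, lam i * ((inner ℝ (g i) d : ℝ) + inner ℝ (v i) d) ≤ 0 :=
      Finset.sum_nonpos fun i _ => hterm i
    have hwd : (inner ℝ w d : ℝ) ≤ 0 := inner_nonpos_of_normal_tangent hw hdT
    linarith


/-- Under a pointwise Slater condition, the cone `P` is closed and `P = C°`. -/
theorem Pcone_closed_and_eq_polar_Ccone {n : ℕ} {ι : Type} [Fintype ι]
    (X : Set (EuclideanSpace ℝ (Fin n))) (hXc : IsClosed X) (hXconv : Convex ℝ X)
    (xbar : EuclideanSpace ℝ (Fin n)) (hxbar : xbar ∈ X)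
    (g : ι → EuclideanSpace ℝ (Fin n)) (ζ : ι → EuclideanSpace ℝ (Fin n) → ℝ)
    (hζ : ∀ i, ConvexOn ℝ Set.univ (ζ i))
    (hslater : ∃ dbar ∈ tangentConeConvex X xbar,
      ∀ i, (inner ℝ (g i) dbar : ℝ) + dirDerivSub (ζ i) xbar dbar < 0) :
    IsClosed (Pcone g ζ X xbar) ∧ Pcone g ζ X xbar = polarCone (Ccone g ζ X xbar) := by
  have hPc : IsClosed (Pcone g ζ X xbar) := Pcone_isClosed hζ hslater
  refine ⟨hPc, ?_⟩
  have hbip := polar_polar_eq (PconvexCone g ζ X xbar) ⟨0, Pcone_zero_mem hζ⟩ hPc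
  have hcoe : (PconvexCone g ζ X xbar : Set (EuclideanSpace ℝ (Fin n))) = Pcone g ζ X xbar := rfl
  rw [hcoe, polar_Pcone_eq_Ccone hζ hXconv hxbar] at hbip
  exact hbip.symm
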